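/- Consider a maximization linear program max λ subject to: for all i ∈ [n], ∑_{j,k} m·p_j·w_{ijk}·x_{jk} ≥ λ; for all i ∈ [n], ∑_{j,k} m·p_j·a_{ijk}·x_{jk} ≤ c_i; for all j, ∑_k x_{jk} ≤ 1; x ≥ 0, where p is a probability distribution over a finite request set J. Let W_E be its optimal value. Let R be a random multiset of m requests drawn i.i.d. from p, and let W_R be the optimal value of the corresponding LP with requests R (in which the capacity constraints are ∑_{j∈R,k} a_{ijk}x_{jk} ≤ c_i and objective constraints ∑_{j∈R,k} w_{ijk}x_{jk} ≥ λ). Then E[W_R] ≤ W_E. -/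

import Mathlib

open Finset

/-- Factorization of a sum over functions into a product of sums. -/
lemma sum_prod_eval {m J : ℕ} (F : Fin m → Fin J → ℝ) :
    ∑ R : Fin m → Fin J, ∏ t, F t (R t) = ∏ t, ∑ j, F t j :=
  (Fintype.prod_sum F).symm

/-- Expectation of a function of a single coordinate under the product measure. -/
lemma lemB {m J : ℕ} (p : Fin J → ℝ) (hp1 : ∑ j, p j = 1)
    (t₀ : Fin m) (h : Fin J → ℝ) :
    ∑ R : Fin m → Fin J, (∏ t, p (R t)) * h (R t₀) = ∑ j, p j * h j := by
  have e1 : ∀ R : Fin m → Fin J,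
      (∏ t, p (R t)) * h (R t₀) = ∏ t, (p (R t) * if t = t₀ then h (R t) else 1) := by
    intro R
    rw [Finset.prod_mul_distrib]
    congr 1
    simp
  calc ∑ R : Fin m → Fin J, (∏ t, p (R t)) * h (R t₀)
      = ∑ R : Fin m → Fin J, ∏ t, (p (R t) * if t = t₀ then h (R t) else 1) :=
        Finset.sum_congr rfl fun R _ => e1 R
    _ = ∏ t, ∑ j, (p j * if t = t₀ then h j else 1) :=
        sum_prod_eval (fun t j => p j * if t = t₀ then h j else 1)
    _ = ∑ j, p j * h j := by
        rw [Finset.prod_eq_single t₀]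
        · simp
        · intro t _ ht; simp [ht, hp1]
        · simp

/-- Exchanging the order of summation for the averaged solution. -/
lemma innerC {m J K : ℕ} (R : Fin m → Fin J) (f : Fin J → Fin K → ℝ) (x : Fin m → Fin K → ℝ) :
    ∑ j, ∑ k, f j k * ∑ t, (if R t = j then x t k else 0)
      = ∑ t, ∑ k, f (R t) k * x t k := by
  simp only [Finset.mul_sum, mul_ite, mul_zero]
  calc ∑ j, ∑ k, ∑ t, (if R t = j then f j k * x t k else 0)
      = ∑ k, ∑ j, ∑ t, (if R t = j then f j k * x t k else 0) := Finset.sum_comm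
    _ = ∑ k, ∑ t, ∑ j, (if R t = j then f j k * x t k else 0) :=
        Finset.sum_congr rfl fun k _ => Finset.sum_comm
    _ = ∑ t, ∑ k, ∑ j, (if R t = j then f j k * x t k else 0) := Finset.sum_comm
    _ = ∑ t, ∑ k, f (R t) k * x t k := by simp [Finset.sum_ite_eq]

lemma lemC {m J K : ℕ} (P : (Fin m → Fin J) → ℝ)
    (x : (Fin m → Fin J) → Fin m → Fin K → ℝ) (f : Fin J → Fin K → ℝ) :
    ∑ j, ∑ k, f j k * (∑ R : Fin m → Fin J, P R * ∑ t, if R t = j then x R t k else 0)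
      = ∑ R : Fin m → Fin J, P R * ∑ t, ∑ k, f (R t) k * x R t k := by
  calc ∑ j, ∑ k, f j k * (∑ R : Fin m → Fin J, P R * ∑ t, if R t = j then x R t k else 0)
      = ∑ j, ∑ k, ∑ R : Fin m → Fin J, P R * (f j k * ∑ t, if R t = j then x R t k else 0) := by
        refine Finset.sum_congr rfl fun j _ => Finset.sum_congr rfl fun k _ => ?_
        rw [Finset.mul_sum]
        exact Finset.sum_congr rfl fun R _ => by ring
    _ = ∑ j, ∑ R : Fin m → Fin J, ∑ k, P R * (f j k * ∑ t, if R t = j then x R t k else 0) :=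
        Finset.sum_congr rfl fun j _ => Finset.sum_comm
    _ = ∑ R : Fin m → Fin J, ∑ j, ∑ k, P R * (f j k * ∑ t, if R t = j then x R t k else 0) :=
        Finset.sum_comm
    _ = ∑ R : Fin m → Fin J, P R * ∑ j, ∑ k, f j k * ∑ t, (if R t = j then x R t k else 0) := by
        refine Finset.sum_congr rfl fun R _ => ?_
        rw [Finset.mul_sum]
        exact Finset.sum_congr rfl fun j _ => (Finset.mul_sum _ _ _).symm
    _ = ∑ R : Fin m → Fin J, P R * ∑ t, ∑ k, f (R t) k * x R t k :=
        Finset.sum_congr rfl fun R _ => by rw [innerC]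

/-- Lemma 1 (expected-instance benchmark): the optimal value `W_E` of the expected
instance LP upper bounds the expectation of the offline fractional optimum `W_R` of a
random instance of `m` requests drawn i.i.d. from the distribution `p`. -/
theorem expected_instance_benchmark
    (n m K J : ℕ) (hJ : 0 < J)
    (a w : Fin n → Fin J → Fin K → ℝ) (c : Fin n → ℝ)
    (ha : ∀ i j k, 0 ≤ a i j k) (hw : ∀ i j k, 0 ≤ w i j k) (hc : ∀ i, 0 ≤ c i)
    (p : Fin J → ℝ) (hp : ∀ j, 0 ≤ p j) (hp1 : ∑ j, p j = 1)
    (FeasE : Set ℝ)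
    (hFeasE : FeasE = {lam : ℝ | ∃ x : Fin J → Fin K → ℝ,
        (∀ j k, 0 ≤ x j k) ∧ (∀ j, ∑ k, x j k ≤ 1) ∧
        (∀ i, ∑ j, ∑ k, (m : ℝ) * p j * a i j k * x j k ≤ c i) ∧
        (∀ i, lam ≤ ∑ j, ∑ k, (m : ℝ) * p j * w i j k * x j k)})
    (FeasR : (Fin m → Fin J) → Set ℝ)
    (hFeasR : ∀ R, FeasR R = {lam : ℝ | ∃ x : Fin m → Fin K → ℝ,
        (∀ t k, 0 ≤ x t k) ∧ (∀ t, ∑ k, x t k ≤ 1) ∧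
        (∀ i, ∑ t, ∑ k, a i (R t) k * x t k ≤ c i) ∧
        (∀ i, lam ≤ ∑ t, ∑ k, w i (R t) k * x t k)})
    (hEne : FeasE.Nonempty) (hEbdd : BddAbove FeasE)
    (hRne : ∀ R, (FeasR R).Nonempty) (hRbdd : ∀ R, BddAbove (FeasR R)) :
    ∑ R : Fin m → Fin J, (∏ t, p (R t)) * sSup (FeasR R) ≤ sSup FeasE := by
  refine le_of_forall_pos_le_add ?_
  intro ε hε
  -- choose near-optimal feasible values for each random instance R
  have hchoice : ∀ R : Fin m → Fin J, ∃ lam, lam ∈ FeasR R ∧ sSup (FeasR R) - ε < lam := by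
    intro R
    obtain ⟨lam, hlam, hgt⟩ := exists_lt_of_lt_csSup (hRne R)
      (by linarith : sSup (FeasR R) - ε < sSup (FeasR R))
    exact ⟨lam, hlam, hgt⟩
  choose lam hmem hgt using hchoice
  simp only [hFeasR, Set.mem_setOf_eq] at hmem
  choose x hx0 hx1 hxa hxw using hmem
  set P : (Fin m → Fin J) → ℝ := fun R => ∏ t, p (R t) with hPdef
  have hP0 : ∀ R, 0 ≤ P R := fun R => Finset.prod_nonneg fun t _ => hp _
  have hP1 : ∑ R : Fin m → Fin J, P R = 1 := by
    rw [hPdef, sum_prod_eval (fun _ j => p j)]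
    simp [hp1]
  set S : Fin J → Fin K → ℝ :=
    fun j k => ∑ R, P R * ∑ t, if R t = j then x R t k else 0 with hSdef
  have hS0 : ∀ j k, 0 ≤ S j k := by
    intro j k
    apply Finset.sum_nonneg
    intro R _
    apply mul_nonneg (hP0 R)
    apply Finset.sum_nonneg
    intro t _
    split
    · exact hx0 R t k
    · exact le_refl 0
  set xE : Fin J → Fin K → ℝ :=
    fun j k => if (m : ℝ) * p j = 0 then 0 else S j k / ((m : ℝ) * p j) with hxEdef
  have key : ∀ j k, (m : ℝ) * p j * xE j k = S j k := by
    intro j k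
    by_cases h : (m : ℝ) * p j = 0
    · simp only [hxEdef, h, if_pos, mul_zero]
      rcases mul_eq_zero.1 h with hm | hpj
      · have hm0 : m = 0 := by exact_mod_cast hm
        subst hm0
        simp [hSdef]
      · symm
        apply Finset.sum_eq_zero
        intro R _
        by_cases hR : ∃ t, R t = j
        · obtain ⟨t, ht⟩ := hR
          have : P R = 0 :=
            Finset.prod_eq_zero (Finset.mem_univ t) (by rw [ht]; exact hpj)
          simp [this]
        · push_neg at hR
          have : (∑ t, if R t = j then x R t k else 0) = 0 :=
            Finset.sum_eq_zero fun t _ => by simp [hR t]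
          simp [this]
    · simp only [hxEdef, h, if_neg, if_false]
      field_simp
      exact mul_div_cancel_left₀ (S j k) h
  have hC : ∀ f : Fin J → Fin K → ℝ,
      ∑ j, ∑ k, f j k * S j k = ∑ R, P R * ∑ t, ∑ k, f (R t) k * x R t k := by
    intro f
    simp only [hSdef]
    exact lemC P x f
  -- nonnegativity of the averaged solution
  have hxE0 : ∀ j k, 0 ≤ xE j k := by
    intro j k
    simp only [hxEdef]
    split
    · exact le_refl 0
    · exact div_nonneg (hS0 j k) (mul_nonneg (Nat.cast_nonneg m) (hp j))
  -- the per-request mass constraint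
  have hxE1 : ∀ j, ∑ k, xE j k ≤ 1 := by
    intro j
    by_cases h : (m : ℝ) * p j = 0
    · simp [hxEdef, h]
    · have hpos : 0 < (m : ℝ) * p j :=
        lt_of_le_of_ne (mul_nonneg (Nat.cast_nonneg m) (hp j)) (Ne.symm h)
      have e1 : ∑ k, xE j k = (∑ k, S j k) / ((m : ℝ) * p j) := by
        rw [Finset.sum_div]
        exact Finset.sum_congr rfl fun k _ => by simp only [hxEdef]; rw [if_neg h]
      rw [e1, div_le_one hpos]
      -- show ∑ k, S j k ≤ m * p j
      have e2 : ∑ k, S j k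
          = ∑ R : Fin m → Fin J, P R * ∑ t, (if R t = j then ∑ k, x R t k else 0) := by
        simp only [hSdef]
        rw [Finset.sum_comm]
        refine Finset.sum_congr rfl fun R _ => ?_
        rw [← Finset.mul_sum]
        congr 1
        rw [Finset.sum_comm]
        refine Finset.sum_congr rfl fun t _ => ?_
        by_cases hRtj : R t = j <;> simp [hRtj]
      have e3 : ∑ R : Fin m → Fin J, P R * ∑ t, (if R t = j then ∑ k, x R t k else 0)
          ≤ ∑ R : Fin m → Fin J, P R * ∑ t, (if R t = j then (1:ℝ) else 0) := by
        refine Finset.sum_le_sum fun R _ => mul_le_mul_of_nonneg_left ?_ (hP0 R)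
        refine Finset.sum_le_sum fun t _ => ?_
        by_cases hRtj : R t = j <;> simp [hRtj, hx1 R t]
      have e4 : ∑ R : Fin m → Fin J, P R * ∑ t, (if R t = j then (1:ℝ) else 0)
          = (m : ℝ) * p j := by
        calc ∑ R : Fin m → Fin J, P R * ∑ t, (if R t = j then (1:ℝ) else 0)
            = ∑ t : Fin m, ∑ R : Fin m → Fin J, P R * (if R t = j then (1:ℝ) else 0) := by
              rw [Finset.sum_comm]
              exact Finset.sum_congr rfl fun R _ => Finset.mul_sum _ _ _
          _ = ∑ t : Fin m, ∑ j', p j' * (if j' = j then (1:ℝ) else 0) :=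
              Finset.sum_congr rfl fun t _ =>
                lemB p hp1 t (fun j' => if j' = j then (1:ℝ) else 0)
          _ = ∑ t : Fin m, p j := by
              refine Finset.sum_congr rfl fun t _ => ?_
              simp [Finset.sum_ite_eq', mul_ite]
          _ = (m : ℝ) * p j := by simp [mul_comm]
      calc ∑ k, S j k
          ≤ ∑ R : Fin m → Fin J, P R * ∑ t, (if R t = j then (1:ℝ) else 0) := e2 ▸ e3
        _ = (m : ℝ) * p j := e4
  -- the averaged solution satisfies the capacity constraints
  have hcap : ∀ i, ∑ j, ∑ k, (m : ℝ) * p j * a i j k * xE j k ≤ c i := by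
    intro i
    have e1 : ∑ j, ∑ k, (m : ℝ) * p j * a i j k * xE j k = ∑ j, ∑ k, a i j k * S j k :=
      Finset.sum_congr rfl fun j _ => Finset.sum_congr rfl fun k _ => by
        rw [← key j k]; ring
    rw [e1, hC (a i)]
    calc ∑ R : Fin m → Fin J, P R * ∑ t, ∑ k, a i (R t) k * x R t k
        ≤ ∑ R : Fin m → Fin J, P R * c i :=
          Finset.sum_le_sum fun R _ => mul_le_mul_of_nonneg_left (hxa R i) (hP0 R)
      _ = c i := by rw [← Finset.sum_mul, hP1, one_mul]
  -- the averaged solution yields a large objective value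
  have hobj : ∀ i, (∑ R : Fin m → Fin J, P R * sSup (FeasR R)) - ε
      ≤ ∑ j, ∑ k, (m : ℝ) * p j * w i j k * xE j k := by
    intro i
    have e1 : ∑ j, ∑ k, (m : ℝ) * p j * w i j k * xE j k = ∑ j, ∑ k, w i j k * S j k :=
      Finset.sum_congr rfl fun j _ => Finset.sum_congr rfl fun k _ => by
        rw [← key j k]; ring
    rw [e1, hC (w i)]
    have e2 : ∑ R : Fin m → Fin J, P R * (sSup (FeasR R) - ε)
        ≤ ∑ R : Fin m → Fin J, P R * ∑ t, ∑ k, w i (R t) k * x R t k :=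
      Finset.sum_le_sum fun R _ =>
        mul_le_mul_of_nonneg_left (le_trans (hgt R).le (hxw R i)) (hP0 R)
    have e3 : ∑ R : Fin m → Fin J, P R * (sSup (FeasR R) - ε)
        = (∑ R : Fin m → Fin J, P R * sSup (FeasR R)) - ε := by
      simp only [mul_sub]
      rw [Finset.sum_sub_distrib, ← Finset.sum_mul, hP1, one_mul]
    linarith
  -- conclude: the shifted average value is feasible for the expected instance
  have hmemE : (∑ R : Fin m → Fin J, P R * sSup (FeasR R)) - ε ∈ FeasE := by
    rw [hFeasE]
    exact ⟨xE, hxE0, hxE1, hcap, hobj⟩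
  have := le_csSup hEbdd hmemE
  linarith
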